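/- arXiv:1810.04306 — 4 statements merged into one kernel-verified Lean document; each statement's English description precedes it below -/
import Mathlib

section
/- For every abelian category A, no point of the atom spectrum ASpec A (with the localizing topology) is a limit point of its own closure; that is, for every atom α, α ∉ closure( closure({α}) ∖ {α} ). -/
universe w v u

open CategoryTheory CategoryTheory.Limits

noncomputable section

namespace AtomSpectrum

def IsQuotientOf {C : Type u} [Category.{v} C] [Abelian C] (N M : C) : Prop :=
  ∃ f : M ⟶ N, Epi f

def IsSubquotientOf {C : Type u} [Category.{v} C] [Abelian C] (N M : C) : Prop :=
  ∃ L : Subobject M, IsQuotientOf N (L : C)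

/-- A monoform object: a nonzero object `H` such that for no subobjects
`0 ≠ L' ⊊ L ⊆ H` and `0 ≠ N ⊆ H` is `L/L'` isomorphic to `N`. -/
def IsMonoform {C : Type u} [Category.{v} C] [Abelian C] (H : C) : Prop :=
  ¬ IsZero H ∧
    ∀ (L : Subobject H) (L' : Subobject (L : C)) (N : Subobject H),
      L' ≠ ⊥ → L' ≠ ⊤ → N ≠ ⊥ → IsEmpty (cokernel L'.arrow ≅ (N : C))

structure MonoformObject (C : Type u) [Category.{v} C] [Abelian C] where
  obj : C
  monoform : IsMonoform obj

variable {C : Type u} [Category.{v} C] [Abelian C]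

/-- Atom equivalence: two monoform objects have isomorphic nonzero subobjects. -/
def AtomEquiv (H₁ H₂ : MonoformObject C) : Prop :=
  ∃ (L₁ : Subobject H₁.obj) (L₂ : Subobject H₂.obj),
    L₁ ≠ ⊥ ∧ L₂ ≠ ⊥ ∧ Nonempty ((L₁ : C) ≅ (L₂ : C))

/-- The atom spectrum of an abelian category. -/
def ASpec (C : Type u) [Category.{v} C] [Abelian C] : Type u :=
  Quot (AtomEquiv (C := C))

def MonoformObject.atom (H : MonoformObject C) : ASpec C := Quot.mk _ H

/-- The atom support of an object. -/
def ASupp (M : C) : Set (ASpec C) :=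
  {α | ∃ H : MonoformObject C, H.atom = α ∧ IsSubquotientOf H.obj M}

/-- The localizing topology on the atom spectrum, with open basis the atom supports. -/
instance : TopologicalSpace (ASpec C) :=
  TopologicalSpace.generateFrom {U | ∃ M : C, U = ASupp M}

/-! ### Auxiliary lemmas -/

lemma isZero_coe_of_eq_bot {X : C} {P : Subobject X} (h : P = ⊥) : IsZero (P : C) := by
  subst h
  exact IsZero.of_iso (isZero_zero C) Subobject.botCoeIsoZero

lemma eq_bot_of_isZero_coe {X : C} {P : Subobject X} (h : IsZero (P : C)) : P = ⊥ := by
  refine le_antisymm (Subobject.le_of_comm (0 : (P : C) ⟶ ((⊥ : Subobject X) : C)) ?_) bot_le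
  rw [zero_comp]
  exact (h.eq_zero_of_src P.arrow).symm

lemma top_ne_bot_of_not_isZero {X : C} (h : ¬ IsZero X) : (⊤ : Subobject X) ≠ ⊥ := by
  intro e
  exact h (IsZero.of_iso (isZero_coe_of_eq_bot e) (asIso (⊤ : Subobject X).arrow).symm)

/-- A morphism out of (the underlying object of) `A ⊔ B` vanishing on `A` and on `B`
is zero. -/
lemma sup_hom_ext_zero {H : C} (A B : Subobject H) {Z : C}
    (w : ((A ⊔ B : Subobject H) : C) ⟶ Z)
    (hA : Subobject.ofLE A (A ⊔ B) le_sup_left ≫ w = 0)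
    (hB : Subobject.ofLE B (A ⊔ B) le_sup_right ≫ w = 0) : w = 0 := by
  have hA' : A ≤ Subobject.mk ((kernelSubobject w).arrow ≫ (A ⊔ B : Subobject H).arrow) := by
    refine Subobject.le_mk_of_comm
      (factorThruKernelSubobject w (Subobject.ofLE A (A ⊔ B) le_sup_left) hA) ?_
    rw [← Category.assoc, factorThruKernelSubobject_comp_arrow, Subobject.ofLE_arrow]
  have hB' : B ≤ Subobject.mk ((kernelSubobject w).arrow ≫ (A ⊔ B : Subobject H).arrow) := by
    refine Subobject.le_mk_of_comm
      (factorThruKernelSubobject w (Subobject.ofLE B (A ⊔ B) le_sup_right) hB) ?_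
    rw [← Category.assoc, factorThruKernelSubobject_comp_arrow, Subobject.ofLE_arrow]
  have hle : A ⊔ B ≤ Subobject.mk ((kernelSubobject w).arrow ≫ (A ⊔ B : Subobject H).arrow) :=
    sup_le hA' hB'
  have hsplit : (Subobject.ofLE _ _ hle ≫ (Subobject.underlyingIso _).hom) ≫
      (kernelSubobject w).arrow = 𝟙 ((A ⊔ B : Subobject H) : C) := by
    apply (cancel_mono (A ⊔ B : Subobject H).arrow).1
    simp only [Category.assoc, Subobject.underlyingIso_hom_comp_eq_mk,
      Subobject.ofLE_arrow, Category.id_comp]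
  calc w = 𝟙 _ ≫ w := (Category.id_comp w).symm
    _ = 0 := by
      rw [← hsplit, Category.assoc, kernelSubobject_arrow_comp, comp_zero]

open CategoryTheory.Abelian in
/-- Monoform objects are uniform: two nonzero subobjects have nonzero intersection. -/
lemma uniform {H : C} (hH : IsMonoform H) (A B : Subobject H) (hA : A ≠ ⊥) (hB : B ≠ ⊥) :
    A ⊓ B ≠ ⊥ := by
  intro hinf
  set i := Subobject.ofLE A (A ⊔ B) le_sup_left with hi
  set j := Subobject.ofLE B (A ⊔ B) le_sup_right with hj
  set π := cokernel.π i with hπ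
  set k := j ≫ π with hk
  -- k is epi
  have hepi : Epi k := by
    rw [Preadditive.epi_iff_cancel_zero]
    intro Z u hu
    have h0 : π ≫ u = 0 := by
      apply sup_hom_ext_zero A B (π ≫ u)
      · rw [← Category.assoc]
        rw [hπ, cokernel.condition i, zero_comp]
      · rw [← Category.assoc]
        exact hu
    exact (cancel_epi π).1 (by rw [h0, comp_zero])
  -- k is mono, via a pseudoelement chase
  have hmono : Mono k := by
    open CategoryTheory.Abelian.Pseudoelement in
    open scoped Pseudoelement in
    apply Pseudoelement.mono_of_zero_of_map_zero
    intro b hb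
    have hb' : π (j b) = 0 := by
      rw [← Pseudoelement.comp_apply]
      exact hb
    obtain ⟨a, ha⟩ := Pseudoelement.pseudo_exact_of_exact (ShortComplex.exact_cokernel i) (j b) hb'
    have hab : A.arrow a = B.arrow b := by
      have h1 : A.arrow a = (A ⊔ B : Subobject H).arrow (i a) := by
        rw [← Pseudoelement.comp_apply, Subobject.ofLE_arrow]
      have h2 : B.arrow b = (A ⊔ B : Subobject H).arrow (j b) := by
        rw [← Pseudoelement.comp_apply, Subobject.ofLE_arrow]
      rw [h1, h2, ha]
    obtain ⟨s, hs1, hs2⟩ := Pseudoelement.pseudo_pullback hab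
    -- the pullback of the two inclusions is zero, since A ⊓ B = ⊥
    have hPb : Subobject.mk (pullback.fst A.arrow B.arrow ≫ A.arrow) = ⊥ := by
      rw [← le_bot_iff, ← hinf]
      refine le_inf ?_ ?_
      · simpa [Subobject.mk_arrow] using
          Subobject.mk_le_mk_of_comm (f₁ := pullback.fst A.arrow B.arrow ≫ A.arrow)
            (f₂ := A.arrow) (pullback.fst A.arrow B.arrow) rfl
      · simpa [Subobject.mk_arrow] using
          Subobject.mk_le_mk_of_comm (f₁ := pullback.fst A.arrow B.arrow ≫ A.arrow)
            (f₂ := B.arrow) (pullback.snd A.arrow B.arrow) pullback.condition.symm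
    have hz : IsZero (pullback A.arrow B.arrow) :=
      IsZero.of_iso (isZero_coe_of_eq_bot hPb) (Subobject.underlyingIso _).symm
    have hsnd : pullback.snd A.arrow B.arrow = 0 := hz.eq_zero_of_src _
    rw [← hs2, hsnd]
    exact Pseudoelement.zero_apply _ _
  -- hence k is an iso
  haveI := hepi; haveI := hmono
  haveI : IsIso k := isIso_of_mono_of_epi k
  -- now contradict monoformity
  have hbot : Subobject.mk i ≠ ⊥ := by
    intro h
    exact (fun h' => hA (eq_bot_of_isZero_coe h'))
      (IsZero.of_iso (isZero_coe_of_eq_bot h) (Subobject.underlyingIso i).symm)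
  have htop : Subobject.mk i ≠ ⊤ := by
    intro h
    haveI : IsIso (Subobject.mk i).arrow := (Subobject.isIso_arrow_iff_eq_top _).2 h
    have : IsIso i := by
      rw [← Subobject.underlyingIso_arrow i]
      infer_instance
    haveI := this
    have hzc : IsZero (cokernel i) := IsZero.of_iso (isZero_zero C) (cokernel.ofEpi i)
    exact hB (eq_bot_of_isZero_coe (IsZero.of_iso hzc (asIso k)))
  refine (hH.2 (A ⊔ B) (Subobject.mk i) B hbot htop hB).false ?_
  exact (cokernelEpiComp (Subobject.underlyingIso i).inv (Subobject.mk i).arrow).symm ≪≫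
    cokernelIsoOfEq (Subobject.underlyingIso_arrow i) ≪≫ (asIso k).symm

/-- `AtomEquiv` is an equivalence relation on monoform objects. -/
lemma atomEquiv_equivalence : Equivalence (AtomEquiv (C := C)) := by
  constructor
  · intro H
    exact ⟨⊤, ⊤, top_ne_bot_of_not_isZero H.monoform.1,
      top_ne_bot_of_not_isZero H.monoform.1, ⟨Iso.refl _⟩⟩
  · rintro H₁ H₂ ⟨L₁, L₂, h₁, h₂, ⟨e⟩⟩
    exact ⟨L₂, L₁, h₂, h₁, ⟨e.symm⟩⟩
  · rintro H₁ H₂ H₃ ⟨A₁, A₂, hA₁, hA₂, ⟨e⟩⟩ ⟨B₂, B₃, hB₂, hB₃, ⟨e'⟩⟩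
    have hC : A₂ ⊓ B₂ ≠ ⊥ := uniform H₂.monoform A₂ B₂ hA₂ hB₂
    set m₁ : ((A₂ ⊓ B₂ : Subobject H₂.obj) : C) ⟶ H₁.obj :=
      Subobject.ofLE _ _ inf_le_left ≫ e.inv ≫ A₁.arrow with hm₁
    set m₃ : ((A₂ ⊓ B₂ : Subobject H₂.obj) : C) ⟶ H₃.obj :=
      Subobject.ofLE _ _ inf_le_right ≫ e'.hom ≫ B₃.arrow with hm₃
    haveI : Mono m₁ := by rw [hm₁]; infer_instance
    haveI : Mono m₃ := by rw [hm₃]; infer_instance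
    refine ⟨Subobject.mk m₁, Subobject.mk m₃, ?_, ?_,
      ⟨Subobject.underlyingIso m₁ ≪≫ (Subobject.underlyingIso m₃).symm⟩⟩
    · intro h
      exact hC (eq_bot_of_isZero_coe
        (IsZero.of_iso (isZero_coe_of_eq_bot h) (Subobject.underlyingIso m₁).symm))
    · intro h
      exact hC (eq_bot_of_isZero_coe
        (IsZero.of_iso (isZero_coe_of_eq_bot h) (Subobject.underlyingIso m₃).symm))

lemma atomEquiv_of_atom_eq {H₁ H₂ : MonoformObject C} (h : H₁.atom = H₂.atom) :
    AtomEquiv H₁ H₂ :=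
  (atomEquiv_equivalence.eqvGen_iff).1 (Quot.eqvGen_exact h)

lemma isSubquotientOf_refl (M : C) : IsSubquotientOf M M :=
  ⟨⊤, (⊤ : Subobject M).arrow, inferInstance⟩

lemma atom_mem_asupp (H : MonoformObject C) : H.atom ∈ ASupp H.obj :=
  ⟨H, rfl, isSubquotientOf_refl _⟩

lemma isOpen_asupp (M : C) : IsOpen (ASupp M) :=
  TopologicalSpace.isOpen_generateFrom_of_mem ⟨M, rfl⟩

/-- Key lemma: if `H` is monoform, `L ≤ H`, `f : L ⟶ Q` is a non-mono epi, and some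
subquotient of `Q` has a nonzero subobject isomorphic to a nonzero subobject of `H`,
we get a contradiction with monoformity of `H`. -/
lemma key {H : C} (hH : IsMonoform H) (L : Subobject H) {Q Q' : C}
    (f : (L : C) ⟶ Q) [Epi f] (hker : ¬ Mono f)
    (S : Subobject Q) (g : (S : C) ⟶ Q') [Epi g]
    (N₁ : Subobject Q') (N₂ : Subobject H) (hN₂ : N₂ ≠ ⊥)
    (e : (N₁ : C) ≅ (N₂ : C)) : False := by
  set φ : pullback f S.arrow ⟶ Q' := pullback.snd f S.arrow ≫ g with hφ
  haveI : Epi φ := epi_comp _ _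
  set ψ : pullback φ N₁.arrow ⟶ (N₁ : C) := pullback.snd φ N₁.arrow with hψ
  set m : pullback φ N₁.arrow ⟶ (L : C) :=
    pullback.fst φ N₁.arrow ≫ pullback.fst f S.arrow with hm
  haveI : Mono m := mono_comp _ _
  set L₀ : Subobject H := Subobject.mk (m ≫ L.arrow) with hL₀
  set K : Subobject (L₀ : C) :=
    Subobject.mk (kernel.ι ψ ≫ (Subobject.underlyingIso (m ≫ L.arrow)).inv) with hK
  -- auxiliary morphisms witnessing that kernel f lands in kernel ψ
  have hcond0 : kernel.ι f ≫ f = (0 : kernel f ⟶ (S : C)) ≫ S.arrow := by simp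
  set u₀ : kernel f ⟶ pullback f S.arrow := pullback.lift (kernel.ι f) 0 hcond0 with hu₀
  have hcond1 : u₀ ≫ φ = (0 : kernel f ⟶ (N₁ : C)) ≫ N₁.arrow := by
    rw [hφ, ← Category.assoc, hu₀, pullback.lift_snd, zero_comp, zero_comp]
  set u₁ : kernel f ⟶ pullback φ N₁.arrow := pullback.lift u₀ 0 hcond1 with hu₁
  have hu₁ψ : u₁ ≫ ψ = 0 := by rw [hψ, hu₁, pullback.lift_snd]
  set u₂ : kernel f ⟶ kernel ψ := kernel.lift ψ u₁ hu₁ψ with hu₂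
  have hcomp : u₂ ≫ kernel.ι ψ ≫ m = kernel.ι f := by
    rw [← Category.assoc, hu₂, kernel.lift_ι, hm, ← Category.assoc, hu₁,
      pullback.lift_fst, hu₀, pullback.lift_fst]
  -- kernel ψ is not zero, for otherwise f would be mono
  have hKψ : ¬ IsZero (kernel ψ) := by
    intro hz
    refine hker (CategoryTheory.Abelian.mono_of_kernel_ι_eq_zero f ?_)
    rw [← hcomp, hz.eq_zero_of_tgt u₂, zero_comp]
  have hKbot : K ≠ ⊥ := by
    intro h
    exact hKψ (IsZero.of_iso (isZero_coe_of_eq_bot h)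
      (Subobject.underlyingIso (kernel.ι ψ ≫ (Subobject.underlyingIso (m ≫ L.arrow)).inv)).symm)
  -- the big iso : cokernel K.arrow ≅ (N₂ : C)
  haveI : Epi ψ := by rw [hψ]; infer_instance
  have bigIso : cokernel K.arrow ≅ (N₂ : C) := by
    refine (cokernelEpiComp (Subobject.underlyingIso _).inv K.arrow).symm ≪≫
      cokernelIsoOfEq (Subobject.underlyingIso_arrow _) ≪≫
      cokernelCompIsIso (kernel.ι ψ) (Subobject.underlyingIso (m ≫ L.arrow)).inv ≪≫
      ?_ ≪≫ e
    exact asIso (Abelian.factorThruCoimage ψ)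
  have hKtop : K ≠ ⊤ := by
    intro h
    haveI : IsIso K.arrow := (Subobject.isIso_arrow_iff_eq_top _).2 h
    have hzc : IsZero (cokernel K.arrow) := IsZero.of_iso (isZero_zero C) (cokernel.ofEpi _)
    exact hN₂ (eq_bot_of_isZero_coe (IsZero.of_iso hzc bigIso.symm))
  exact (hH.2 L₀ K N₂ hKbot hKtop hN₂).false bigIso

/-- In the atom spectrum of an abelian category (with the localizing topology), no point is
a limit point of its own closure. -/
theorem aspec_not_limitPt_of_closure (C : Type u) [Category.{v} C] [Abelian C]
    (α : ASpec C) : α ∉ closure (closure {α} \ {α}) := by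
  intro hmem
  obtain ⟨H, rfl⟩ : ∃ H : MonoformObject C, H.atom = α := Quot.exists_rep α
  obtain ⟨β, hβU, hβD⟩ :=
    mem_closure_iff.1 hmem _ (isOpen_asupp H.obj) (atom_mem_asupp H)
  obtain ⟨H', hH'β, L, f, hf⟩ := hβU
  haveI := hf
  by_cases hm : Mono f
  · -- then H' is isomorphic to a subobject of H, so β = α, contradiction
    haveI := isIso_of_mono_of_epi f
    have hne : ¬ IsZero H'.obj := H'.monoform.1
    have hLne : L ≠ ⊥ := fun h =>
      hne (IsZero.of_iso (isZero_coe_of_eq_bot h) (asIso f).symm)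
    have hequiv : AtomEquiv H' H :=
      ⟨⊤, L, top_ne_bot_of_not_isZero hne, hLne,
        ⟨asIso (⊤ : Subobject H'.obj).arrow ≪≫ (asIso f).symm⟩⟩
    exact hβD.2 (by rw [← hH'β]; exact Quot.sound hequiv)
  · -- f has nonzero kernel; use β ∈ closure {α} with the open set ASupp H'.obj
    obtain ⟨γ, hγ1, hγ2⟩ := mem_closure_iff.1 hβD.1 _ (isOpen_asupp H'.obj)
      ⟨H', hH'β, isSubquotientOf_refl _⟩
    rw [Set.mem_singleton_iff] at hγ2
    subst hγ2
    obtain ⟨H'', hH''γ, S, g, hg⟩ := hγ1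
    haveI := hg
    obtain ⟨N₁, N₂, _, hN₂, ⟨e⟩⟩ := atomEquiv_of_atom_eq hH''γ
    exact key H.monoform L f hm S g N₁ N₂ hN₂ e

end AtomSpectrum

end
end

section
/- Let X be the topological space with underlying set {x_i : i ∈ ℕ ∪ {∞}} (points pairwise distinct) whose nonempty open subsets are exactly the sets U_j = {x_i : j ≤ i} for j ∈ ℕ (where ∞ is larger than every integer). Then: (1) X is a noetherian topological space, so every subset of X is quasi-compact; (2) X is a spectral space; (3) x_∞ is a limit point of the closure of {x_∞}, the set L({x_∞}) of limit points of {x_∞} equals X ∖ {x_∞} and is not closed, and L(closure({x_∞})) = X ≠ L({x_∞}). -/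
noncomputable section

/-- The set of limit points of `S`: the points `x` lying in the closure of `S \ {x}`. -/
def limitPts {X : Type*} [TopologicalSpace X] (S : Set X) : Set X :=
  {x | x ∈ closure (S \ {x})}

/-- A spectral space: Kolmogorov, quasi-compact, quasi-compact open subsets closed under
finite intersection and forming an open basis, and sober. -/
structure IsSpectralSpace (X : Type*) [TopologicalSpace X] : Prop where
  t0 : T0Space X
  compactSpace : CompactSpace X
  isCompact_inter : ∀ U V : Set X, IsOpen U → IsCompact U → IsOpen V → IsCompact V →
    IsCompact (U ∩ V)
  isBasis_compact_open : TopologicalSpace.IsTopologicalBasis {U : Set X | IsOpen U ∧ IsCompact U}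
  sober : QuasiSober X

/-- The points `x_i`, `i ∈ ℕ ∪ {∞}` (pairwise distinct by construction). -/
inductive SeqPt : Type where
  | fin : ℕ → SeqPt
  | inf : SeqPt

/-- The set `U_j = {x_i : j ≤ i}` (where `∞` is larger than every integer). -/
def SeqPt.U (j : ℕ) : Set SeqPt :=
  {x | x = SeqPt.inf ∨ ∃ i : ℕ, x = SeqPt.fin i ∧ j ≤ i}

/-- The topology on `{x_i : i ∈ ℕ ∪ {∞}}` whose nonempty open subsets are exactly the
sets `U_j`, `j ∈ ℕ`.  (The family `{U_j}` contains the whole space and is closed under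
finite intersections and arbitrary nonempty unions, so the generated topology has exactly
`∅` and the `U_j` as open sets.) -/
instance : TopologicalSpace SeqPt :=
  TopologicalSpace.generateFrom {U | ∃ j : ℕ, U = SeqPt.U j}

namespace SeqPt

lemma mem_U_inf (j : ℕ) : SeqPt.inf ∈ SeqPt.U j := Or.inl rfl

lemma mem_U_fin {i j : ℕ} : SeqPt.fin i ∈ SeqPt.U j ↔ j ≤ i := by
  constructor
  · rintro (h | ⟨k, hk, hle⟩)
    · exact absurd h (by simp)
    · cases hk; exact hle
  · intro h; exact Or.inr ⟨i, rfl, h⟩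

lemma U_antitone {j k : ℕ} (h : j ≤ k) : SeqPt.U k ⊆ SeqPt.U j := by
  rintro x hx
  cases x with
  | inf => exact mem_U_inf j
  | fin i => exact mem_U_fin.2 (le_trans h (mem_U_fin.1 hx))

lemma U_zero : SeqPt.U 0 = Set.univ := by
  ext x; cases x with
  | inf => simp [mem_U_inf]
  | fin i => simp [mem_U_fin]

lemma isOpen_iff {V : Set SeqPt} : IsOpen V ↔ V = ∅ ∨ ∃ j : ℕ, V = SeqPt.U j := by
  constructor
  · intro h
    induction h with
    | basic u hu => exact Or.inr hu
    | univ => exact Or.inr ⟨0, U_zero.symm⟩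
    | inter u v _ _ hu hv =>
      rcases hu with rfl | ⟨j, rfl⟩
      · exact Or.inl (by simp)
      rcases hv with rfl | ⟨k, rfl⟩
      · exact Or.inl (by simp)
      refine Or.inr ⟨max j k, ?_⟩
      ext x; cases x with
      | inf => simp [mem_U_inf]
      | fin i => simp [mem_U_fin]
    | sUnion S _ hS =>
      by_cases hJ : ∃ j : ℕ, SeqPt.U j ∈ S
      · classical
        refine Or.inr ⟨sInf {j | SeqPt.U j ∈ S}, ?_⟩
        apply Set.Subset.antisymm
        · rintro x ⟨t, htS, hxt⟩
          rcases hS t htS with rfl | ⟨j, rfl⟩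
          · exact absurd hxt (by simp)
          · exact U_antitone (Nat.sInf_le htS) hxt
        · intro x hx
          exact ⟨_, Nat.sInf_mem (s := {j | SeqPt.U j ∈ S}) hJ, hx⟩
      · refine Or.inl ?_
        ext x
        simp only [Set.mem_sUnion, Set.mem_empty_iff_false, iff_false]
        rintro ⟨t, htS, hxt⟩
        rcases hS t htS with rfl | ⟨j, rfl⟩
        · exact hxt
        · exact hJ ⟨j, htS⟩
  · rintro (rfl | ⟨j, rfl⟩)
    · exact isOpen_empty
    · exact TopologicalSpace.GenerateOpen.basic _ ⟨j, rfl⟩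

lemma isOpen_U (j : ℕ) : IsOpen (SeqPt.U j) := isOpen_iff.2 (Or.inr ⟨j, rfl⟩)

/-- Every subset is compact. -/
lemma isCompact_all (s : Set SeqPt) : IsCompact s := by
  classical
  rw [isCompact_iff_finite_subcover]
  intro ι V hVopen hcov
  rcases s.eq_empty_or_nonempty with rfl | ⟨x, hx⟩
  · exact ⟨∅, by simp⟩
  have hJ : ∃ j : ℕ, ∃ i : ι, V i = SeqPt.U j := by
    rcases Set.mem_iUnion.1 (hcov hx) with ⟨i, hi⟩
    rcases isOpen_iff.1 (hVopen i) with h | ⟨j, hj⟩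
    · rw [h] at hi; exact absurd hi (by simp)
    · exact ⟨j, i, hj⟩
  set J : Set ℕ := {j | ∃ i : ι, V i = SeqPt.U j}
  have hJne : J.Nonempty := hJ
  have hm : ∃ i : ι, V i = SeqPt.U (sInf J) := Nat.sInf_mem hJne
  obtain ⟨i₀, hi₀⟩ := hm
  refine ⟨{i₀}, ?_⟩
  intro y hy
  rcases Set.mem_iUnion.1 (hcov hy) with ⟨i, hi⟩
  rcases isOpen_iff.1 (hVopen i) with h | ⟨k, hk⟩
  · rw [h] at hi; exact absurd hi (by simp)
  simp only [Finset.mem_singleton, Set.iUnion_iUnion_eq_left, hi₀]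
  exact U_antitone (Nat.sInf_le (show ∃ i' : ι, V i' = SeqPt.U k from ⟨i, hk⟩)) (hk ▸ hi)

lemma closure_of_mem_inf {S : Set SeqPt} (h : SeqPt.inf ∈ S) : closure S = Set.univ := by
  apply Set.eq_univ_of_forall
  intro x
  rw [mem_closure_iff]
  intro o ho hxo
  rcases isOpen_iff.1 ho with rfl | ⟨j, rfl⟩
  · exact absurd hxo (by simp)
  · exact ⟨SeqPt.inf, mem_U_inf j, h⟩

lemma closure_fin (n : ℕ) : closure {SeqPt.fin n} = (SeqPt.U (n + 1))ᶜ := by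
  apply Set.Subset.antisymm
  · apply closure_minimal
    · intro x hx; cases hx
      simp [mem_U_fin]
    · exact (isOpen_U (n + 1)).isClosed_compl
  · intro x hx
    rw [mem_closure_iff]
    intro o ho hxo
    rcases isOpen_iff.1 ho with rfl | ⟨j, rfl⟩
    · exact absurd hxo (by simp)
    cases x with
    | inf => exact absurd (mem_U_inf (n + 1)) hx
    | fin m =>
      have hmn : m ≤ n := by
        by_contra hmn; exact hx (mem_U_fin.2 (by omega))
      exact ⟨SeqPt.fin n, mem_U_fin.2 (le_trans (mem_U_fin.1 hxo) hmn), rfl⟩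

lemma closure_univ_diff_inf : closure (Set.univ \ {SeqPt.inf}) = Set.univ := by
  apply Set.eq_univ_of_forall
  intro x
  rw [mem_closure_iff]
  intro o ho hxo
  rcases isOpen_iff.1 ho with rfl | ⟨j, rfl⟩
  · exact absurd hxo (by simp)
  · exact ⟨SeqPt.fin j, mem_U_fin.2 le_rfl, by simp⟩

instance : T0Space SeqPt := by
  refine t0Space_iff_inseparable SeqPt |>.2 fun x y h => ?_
  rw [inseparable_iff_forall_isOpen] at h
  cases x with
  | inf =>
    cases y with
    | inf => rfl
    | fin m =>
      have := (h _ (isOpen_U (m + 1))).1 (mem_U_inf _)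
      exact absurd (mem_U_fin.1 this) (by omega)
  | fin n =>
    cases y with
    | inf =>
      have := (h _ (isOpen_U (n + 1))).2 (mem_U_inf _)
      exact absurd (mem_U_fin.1 this) (by omega)
    | fin m =>
      have h1 := fun hh => mem_U_fin.1 ((h _ (isOpen_U m)).2 (mem_U_fin.2 hh))
      have h2 := fun hh => mem_U_fin.1 ((h _ (isOpen_U n)).1 (mem_U_fin.2 hh))
      congr 1
      omega

instance : QuasiSober SeqPt := by
  constructor
  intro s hirr hcl
  have hopen : IsOpen sᶜ := hcl.isOpen_compl
  rcases isOpen_iff.1 hopen with hc | ⟨j, hj⟩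
  · have hs : s = Set.univ := by
      rw [← compl_compl s, hc, Set.compl_empty]
    exact ⟨SeqPt.inf, by rw [IsGenericPoint, closure_of_mem_inf (Set.mem_singleton _), hs]⟩
  · have hs : s = (SeqPt.U j)ᶜ := by rw [← compl_compl s, hj]
    cases j with
    | zero =>
      exfalso
      rcases hirr.nonempty with ⟨x, hx⟩
      rw [hs, U_zero] at hx
      simp at hx
    | succ n =>
      exact ⟨SeqPt.fin n, by rw [IsGenericPoint, closure_fin, hs]⟩

end SeqPt

open SeqPt in
/-- The space `X` with points `x_i (i ∈ ℕ ∪ {∞})` and nonempty opens `U_j = {x_i : j ≤ i}`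
is a noetherian spectral space in which `x_∞` is a limit point of its own closure,
`L({x_∞}) = X ∖ {x_∞}` is not closed, and `L(closure {x_∞}) = X ≠ L({x_∞})`. -/
theorem seqPt_spectral_not_atomlike :
    (TopologicalSpace.NoetherianSpace SeqPt ∧ ∀ S : Set SeqPt, IsCompact S) ∧
    IsSpectralSpace SeqPt ∧
    (SeqPt.inf ∈ limitPts (closure {SeqPt.inf}) ∧
      limitPts {SeqPt.inf} = {SeqPt.inf}ᶜ ∧
      ¬ IsClosed (limitPts {SeqPt.inf}) ∧
      limitPts (closure {SeqPt.inf}) = Set.univ ∧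
      limitPts (closure {SeqPt.inf}) ≠ limitPts {SeqPt.inf}) := by
  have hclinf : closure {SeqPt.inf} = Set.univ :=
    closure_of_mem_inf (Set.mem_singleton _)
  have hLcl : limitPts (closure {SeqPt.inf}) = Set.univ := by
    rw [hclinf]
    apply Set.eq_univ_of_forall
    intro x
    show x ∈ closure (Set.univ \ {x})
    cases x with
    | inf => rw [closure_univ_diff_inf]; trivial
    | fin n =>
      have : SeqPt.inf ∈ Set.univ \ {SeqPt.fin n} := by simp
      have := closure_of_mem_inf this
      rw [this]; trivial
  have hL1 : limitPts {SeqPt.inf} = {SeqPt.inf}ᶜ := by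
    ext x
    show x ∈ closure (({SeqPt.inf} : Set SeqPt) \ {x}) ↔ x ∈ ({SeqPt.inf}ᶜ : Set SeqPt)
    by_cases hx : x = SeqPt.inf
    · subst hx; simp
    · have : ({SeqPt.inf} : Set SeqPt) \ {x} = {SeqPt.inf} := by
        ext y; simp only [Set.mem_diff, Set.mem_singleton_iff]
        constructor
        · rintro ⟨h, _⟩; exact h
        · rintro rfl; exact ⟨rfl, fun h => hx h.symm⟩
      rw [this, hclinf]
      simp [hx]
  refine ⟨⟨TopologicalSpace.noetherianSpace_iff_isCompact.2 isCompact_all, isCompact_all⟩,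
    ⟨inferInstance, ⟨isCompact_all _⟩, fun U V _ _ _ _ => isCompact_all _, ?_, inferInstance⟩,
    ?_, hL1, ?_, hLcl, ?_⟩
  · have : {U : Set SeqPt | IsOpen U ∧ IsCompact U} = {U : Set SeqPt | IsOpen U} := by
      ext U; simp only [Set.mem_setOf_eq, and_iff_left_iff_imp]
      exact fun _ => isCompact_all U
    rw [this]
    exact TopologicalSpace.isTopologicalBasis_opens
  · rw [hLcl]; trivial
  · rw [hL1, isClosed_compl_iff, isOpen_iff]
    rintro (h | ⟨j, hj⟩)
    · exact absurd h (by simp [Set.eq_empty_iff_forall_notMem])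
    · have : SeqPt.fin j ∈ SeqPt.U j := mem_U_fin.2 le_rfl
      rw [← hj] at this
      simp at this
  · rw [hLcl, hL1]
    intro h
    have : SeqPt.inf ∈ ({SeqPt.inf}ᶜ : Set SeqPt) := h ▸ trivial
    simp at this
end
end

section
/- Let X be a topological space in which no point is a limit point of its own closure, i.e. x ∉ closure( closure({x}) ∖ {x} ) for all x ∈ X. Then for every subset S ⊆ X, the set L(S) of limit points of S is a closed subset of X. -/
noncomputable section

/-- If no point of a topological space is a limit point of its own closure, then the set of
limit points of any subset is closed. -/
theorem limitPts_isClosed {X : Type*} [TopologicalSpace X]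
    (hX : ∀ x : X, x ∉ closure (closure {x} \ {x})) (S : Set X) :
    IsClosed (limitPts S) := by
  rw [← closure_subset_iff_isClosed]
  intro x hx
  show x ∈ closure (S \ {x})
  rw [mem_closure_iff]
  intro U hU hxU
  have hX' := hX x
  rw [mem_closure_iff] at hX'
  push_neg at hX'
  obtain ⟨V, hV, hxV, hVempty⟩ := hX'
  rw [mem_closure_iff] at hx
  obtain ⟨y, ⟨hyU, hyV⟩, hyL⟩ := hx (U ∩ V) (hU.inter hV) ⟨hxU, hxV⟩
  by_cases hyx : y = x
  · subst hyx
    have := hyL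
    rw [limitPts, Set.mem_setOf_eq, mem_closure_iff] at this
    exact this U hU hyU
  · have hynotcl : y ∉ closure ({x} : Set X) := by
      intro hc
      exact (Set.not_nonempty_iff_eq_empty.mpr hVempty) ⟨y, hyV, hc, hyx⟩
    have hyL' := hyL
    rw [limitPts, Set.mem_setOf_eq, mem_closure_iff] at hyL'
    obtain ⟨z, ⟨⟨hzU, hznotcl⟩, hzS, hzy⟩⟩ :=
      hyL' (U ∩ (closure ({x} : Set X))ᶜ)
        (hU.inter isClosed_closure.isOpen_compl) ⟨hyU, hynotcl⟩
    refine ⟨z, hzU, hzS, ?_⟩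
    intro hzx
    exact hznotcl (by rw [Set.mem_singleton_iff.mp hzx]; exact subset_closure rfl)

end
end

section
/- Let X be a topological space in which no point is a limit point of its own closure, i.e. x ∉ closure( closure({x}) ∖ {x} ) for all x ∈ X. Then for every subset S ⊆ X one has L(closure(S)) = L(S). -/
noncomputable section

/-- If no point of a topological space is a limit point of its own closure, then a subset
and its closure have the same limit points. -/
theorem limitPts_closure {X : Type*} [TopologicalSpace X]
    (hX : ∀ x : X, x ∉ closure (closure {x} \ {x})) (S : Set X) :
    limitPts (closure S) = limitPts S := by
  ext x
  simp only [limitPts, Set.mem_setOf_eq]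
  constructor
  · intro hx
    by_contra hns
    -- open U ∋ x with U ∩ (S \ {x}) = ∅
    rw [mem_closure_iff] at hns hx
    push_neg at hns
    obtain ⟨U, hUo, hxU, hU⟩ := hns
    have hx' := hX x
    rw [mem_closure_iff] at hx'
    push_neg at hx'
    obtain ⟨V, hVo, hxV, hV⟩ := hx'
    obtain ⟨y, ⟨hyU, hyV⟩, hyc, hyx⟩ := hx (U ∩ V) (hUo.inter hVo) ⟨hxU, hxV⟩
    -- y ∉ closure {x}
    have hyclx : y ∉ closure ({x} : Set X) := by
      intro h
      exact hV.subset ⟨hyV, h, hyx⟩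
    -- open nbhd of y avoiding x, inside U, meets S
    have := (mem_closure_iff.mp hyc) (U ∩ (closure ({x} : Set X))ᶜ)
      (hUo.inter isClosed_closure.isOpen_compl) ⟨hyU, hyclx⟩
    obtain ⟨s, ⟨hsU, hsc⟩, hsS⟩ := this
    exact hU.subset ⟨hsU, hsS, fun hsx => hsc (hsx ▸ subset_closure rfl)⟩
  · intro hx
    exact closure_mono (Set.diff_subset_diff_left subset_closure) hx

end
end
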